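/- arXiv:2301.03481 — 4 statements merged into one kernel-verified Lean document; each statement's English description precedes it below -/
import Mathlib

section
/- Let λ > 0, let (q_k)_{k∈ℕ} be nonnegative real numbers with ∑_{k≥0} q_k = 1, let G(w) = ∑_{k≥0} q_k w^k, set 𝓜(w) = exp(λ (G(w) − 1)), and define γ(w) = 𝓜((1−w)/2) / 𝓜(1/2). Then γ''(0) − (γ'(0))^2 − γ'(0) = λ ∑_{k≥0} k^2 2^{−k} q_k = λ E[Z^2 (1/2)^Z] ≥ 0, where Z is a random variable with ℙ(Z = k) = q_k. -/
open Set

lemma aux_sum_u1 : Summable (fun k : ℕ => (4/3 : ℝ) * ((k : ℝ) * (3/4 : ℝ) ^ k)) := by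
  have h := summable_pow_mul_geometric_of_norm_lt_one (R := ℝ) 1 (r := (3/4 : ℝ))
    (by rw [Real.norm_eq_abs, abs_of_nonneg] <;> norm_num)
  simpa [pow_one] using h.mul_left (4/3 : ℝ)

lemma aux_sum_u2 : Summable (fun k : ℕ => (16/9 : ℝ) * ((k : ℝ) ^ 2 * (3/4 : ℝ) ^ k)) := by
  have h := summable_pow_mul_geometric_of_norm_lt_one (R := ℝ) 2 (r := (3/4 : ℝ))
    (by rw [Real.norm_eq_abs, abs_of_nonneg] <;> norm_num)
  simpa using h.mul_left (16/9 : ℝ)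

lemma aux_bound1 (q : ℕ → ℝ) (hq : ∀ k, 0 ≤ q k) (hq1 : ∀ k, q k ≤ 1)
    {y : ℝ} (hy : y ∈ Set.Ioo (-(3/4) : ℝ) (3/4)) (k : ℕ) :
    ‖q k * ((k : ℝ) * y ^ (k - 1))‖ ≤ (4/3 : ℝ) * ((k : ℝ) * (3/4 : ℝ) ^ k) := by
  have hy' : |y| ≤ 3/4 := by
    rw [abs_le]; constructor <;> [linarith [hy.1]; linarith [hy.2]]
  have h1 : ‖q k * ((k : ℝ) * y ^ (k - 1))‖ = q k * ((k : ℝ) * |y| ^ (k - 1)) := by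
    rw [norm_mul, norm_mul, Real.norm_eq_abs, Real.norm_eq_abs, Real.norm_eq_abs,
      abs_of_nonneg (hq k), Nat.abs_cast, abs_pow]
  rw [h1]
  have h2 : q k * ((k : ℝ) * |y| ^ (k - 1)) ≤ 1 * ((k : ℝ) * (3/4 : ℝ) ^ (k - 1)) := by
    apply mul_le_mul (hq1 k) _ (by positivity) zero_le_one
    exact mul_le_mul_of_nonneg_left (pow_le_pow_left₀ (abs_nonneg y) hy' _) (Nat.cast_nonneg k)
  refine h2.trans (le_of_eq ?_)
  rcases k with _ | n
  · simp
  · have : (n + 1 : ℕ) - 1 = n := rfl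
    rw [one_mul, this, pow_succ]
    ring

lemma aux_bound2 (q : ℕ → ℝ) (hq : ∀ k, 0 ≤ q k) (hq1 : ∀ k, q k ≤ 1)
    {y : ℝ} (hy : y ∈ Set.Ioo (-(3/4) : ℝ) (3/4)) (k : ℕ) :
    ‖q k * ((k : ℝ) * (((k - 1 : ℕ) : ℝ) * y ^ (k - 1 - 1)))‖ ≤
      (16/9 : ℝ) * ((k : ℝ) ^ 2 * (3/4 : ℝ) ^ k) := by
  have hy' : |y| ≤ 3/4 := by
    rw [abs_le]; constructor <;> [linarith [hy.1]; linarith [hy.2]]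
  rcases k with _ | _ | n
  · simp
  · simp; norm_num
  · have h1 : ‖q (n+2) * (((n+2 : ℕ) : ℝ) * ((((n+2) - 1 : ℕ) : ℝ) * y ^ ((n+2) - 1 - 1)))‖
        = q (n+2) * (((n+2 : ℕ) : ℝ) * ((((n+1) : ℕ) : ℝ) * |y| ^ n)) := by
      have e1 : (n + 2 : ℕ) - 1 = n + 1 := rfl
      have e2 : (n + 2 : ℕ) - 1 - 1 = n := rfl
      rw [e2, e1, norm_mul, norm_mul, norm_mul, Real.norm_eq_abs, Real.norm_eq_abs,
        Real.norm_eq_abs, Real.norm_eq_abs, abs_of_nonneg (hq _), Nat.abs_cast,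
        Nat.abs_cast, abs_pow]
    rw [h1]
    have hp : |y| ^ n ≤ (3/4 : ℝ) ^ n := pow_le_pow_left₀ (abs_nonneg y) hy' n
    have h2 : q (n+2) * (((n+2 : ℕ) : ℝ) * ((((n+1) : ℕ) : ℝ) * |y| ^ n))
        ≤ 1 * (((n+2 : ℕ) : ℝ) * ((((n+1) : ℕ) : ℝ) * (3/4 : ℝ) ^ n)) := by
      apply mul_le_mul (hq1 _) _ (by positivity) zero_le_one
      have : (((n+1) : ℕ) : ℝ) * |y| ^ n ≤ (((n+1) : ℕ) : ℝ) * (3/4 : ℝ) ^ n :=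
        mul_le_mul_of_nonneg_left hp (by positivity)
      exact mul_le_mul_of_nonneg_left this (by positivity)
    refine h2.trans ?_
    rw [one_mul]
    have e : (3/4 : ℝ) ^ (n+2) = (3/4 : ℝ) ^ n * (3/4 : ℝ) ^ 2 := by rw [pow_add]
    rw [e]
    push_cast
    nlinarith [mul_nonneg (by positivity : (0:ℝ) ≤ (n:ℝ)+2)
      (pow_nonneg (by norm_num : (0:ℝ) ≤ 3/4) n)]

lemma aux_deriv1 (q : ℕ → ℝ) (hq : ∀ k, 0 ≤ q k) (hq1 : ∀ k, q k ≤ 1) (hsq : Summable q)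
    {x : ℝ} (hx : x ∈ Set.Ioo (-(3/4) : ℝ) (3/4)) :
    HasDerivAt (fun w => ∑' k : ℕ, q k * w ^ k)
      (∑' k : ℕ, q k * ((k : ℝ) * x ^ (k - 1))) x := by
  have h0 : (0 : ℝ) ∈ Set.Ioo (-(3/4) : ℝ) (3/4) := by constructor <;> norm_num
  refine hasDerivAt_tsum_of_isPreconnected aux_sum_u1 isOpen_Ioo
    (isPreconnected_Ioo) (fun k y hy => (hasDerivAt_pow k y).const_mul (q k))
    (fun k y hy => aux_bound1 q hq hq1 hy k) h0 ?_ hx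
  apply Summable.of_norm_bounded hsq
  intro k
  rcases k with _ | n <;> simp [abs_of_nonneg (hq _), hq]

lemma aux_deriv2 (q : ℕ → ℝ) (hq : ∀ k, 0 ≤ q k) (hq1 : ∀ k, q k ≤ 1)
    {x : ℝ} (hx : x ∈ Set.Ioo (-(3/4) : ℝ) (3/4)) :
    HasDerivAt (fun w => ∑' k : ℕ, q k * ((k : ℝ) * w ^ (k - 1)))
      (∑' k : ℕ, q k * ((k : ℝ) * (((k - 1 : ℕ) : ℝ) * x ^ (k - 1 - 1)))) x := by
  have h0 : (0 : ℝ) ∈ Set.Ioo (-(3/4) : ℝ) (3/4) := by constructor <;> norm_num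
  refine hasDerivAt_tsum_of_isPreconnected aux_sum_u2 isOpen_Ioo
    (isPreconnected_Ioo) (fun k y hy => ?_)
    (fun k y hy => aux_bound2 q hq hq1 hy k) h0 ?_ hx
  · have := (hasDerivAt_pow (k - 1) y).const_mul (q k * (k : ℝ))
    simpa [mul_assoc] using this
  · apply Summable.of_norm_bounded aux_sum_u1
    intro k
    exact aux_bound1 q hq hq1 h0 k

lemma aux_half_mem : (1/2 : ℝ) ∈ Set.Ioo (-(3/4) : ℝ) (3/4) := by constructor <;> norm_num

lemma aux_tsum_alg (q : ℕ → ℝ) (hq : ∀ k, 0 ≤ q k) (hq1 : ∀ k, q k ≤ 1) (l : ℝ) :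
    l/4 * (∑' k : ℕ, q k * ((k : ℝ) * (((k - 1 : ℕ) : ℝ) * (1/2 : ℝ) ^ (k - 1 - 1))))
      + l/2 * (∑' k : ℕ, q k * ((k : ℝ) * (1/2 : ℝ) ^ (k - 1)))
      = l * ∑' k : ℕ, (k : ℝ) ^ 2 * (1/2 : ℝ) ^ k * q k := by
  have S1 : Summable (fun k : ℕ => q k * ((k : ℝ) * (1/2 : ℝ) ^ (k - 1))) :=
    Summable.of_norm_bounded aux_sum_u1 (fun k => aux_bound1 q hq hq1 aux_half_mem k)
  have S2 : Summable (fun k : ℕ => q k * ((k : ℝ) * (((k - 1 : ℕ) : ℝ) * (1/2 : ℝ) ^ (k - 1 - 1)))) :=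
    Summable.of_norm_bounded aux_sum_u2 (fun k => aux_bound2 q hq hq1 aux_half_mem k)
  have S3 : Summable (fun k : ℕ => (k : ℝ) ^ 2 * (1/2 : ℝ) ^ k * q k) := by
    apply Summable.of_norm_bounded aux_sum_u2
    intro k
    rw [norm_mul, norm_mul, Real.norm_eq_abs, Real.norm_eq_abs, Real.norm_eq_abs,
      abs_of_nonneg (hq k), abs_pow, sq_abs]
    rw [abs_pow, abs_of_nonneg (by norm_num : (0:ℝ) ≤ (1/2:ℝ))]
    have h1 : (1/2 : ℝ) ^ k ≤ (3/4 : ℝ) ^ k := pow_le_pow_left₀ (by norm_num) (by norm_num) k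
    have h2 : (k : ℝ) ^ 2 * (1/2 : ℝ) ^ k * q k ≤ (k : ℝ) ^ 2 * (3/4 : ℝ) ^ k * 1 := by
      apply mul_le_mul _ (hq1 k) (hq k) (by positivity)
      exact mul_le_mul_of_nonneg_left h1 (by positivity)
    nlinarith [pow_nonneg (by norm_num : (0:ℝ) ≤ 3/4) k, sq_nonneg (k : ℝ)]
  rw [← tsum_mul_left, ← tsum_mul_left, ← tsum_mul_left,
    ← Summable.tsum_add (S2.mul_left (l/4)) (S1.mul_left (l/2))]
  apply tsum_congr
  intro k
  rcases k with _ | _ | n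
  · simp
  · push_cast; ring
  · have e1 : (n + 2 : ℕ) - 1 = n + 1 := rfl
    have e2 : (n + 2 : ℕ) - 1 - 1 = n := rfl
    rw [e2, e1]
    have e3 : (1/2 : ℝ) ^ (n + 2) = (1/2 : ℝ) ^ n * (1/2 : ℝ) ^ 2 := by rw [pow_add]
    have e4 : (1/2 : ℝ) ^ (n + 1) = (1/2 : ℝ) ^ n * (1/2 : ℝ) := by rw [pow_succ]
    rw [e3, e4]
    push_cast
    ring


/-- In the compound Poisson case `M w = exp (l (G w - 1))`, where
`G w = ∑ₖ qₖ wᵏ` is the generating function of a probability distribution `q` on ℕ and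
`l > 0`, with `γ w = M ((1-w)/2) / M (1/2)`, one has
`γ''(0) - γ'(0)² - γ'(0) = l · ∑ₖ k² (1/2)ᵏ qₖ ≥ 0`. -/
theorem gamma_second_deriv_compound_poisson
    (l : ℝ) (hl : 0 < l)
    (q : ℕ → ℝ) (hq : ∀ k, 0 ≤ q k) (hsum : HasSum q 1)
    (G : ℝ → ℝ) (hG : ∀ w, G w = ∑' k : ℕ, q k * w ^ k)
    (M : ℝ → ℝ) (hM : ∀ w, M w = Real.exp (l * (G w - 1)))
    (γ : ℝ → ℝ) (hγ : ∀ w, γ w = M ((1 - w) / 2) / M (1 / 2)) :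
    iteratedDeriv 2 γ 0 - (deriv γ 0) ^ 2 - deriv γ 0 =
      l * ∑' k : ℕ, (k : ℝ) ^ 2 * (1 / 2 : ℝ) ^ k * q k ∧
    0 ≤ iteratedDeriv 2 γ 0 - (deriv γ 0) ^ 2 - deriv γ 0 := by
  have hq1 : ∀ k, q k ≤ 1 := fun k => le_hasSum hsum k (fun j _ => hq j)
  have hsq : Summable q := hsum.summable
  set D1 : ℝ → ℝ := fun x => ∑' k : ℕ, q k * ((k : ℝ) * x ^ (k - 1)) with hD1
  set D2 : ℝ → ℝ := fun x => ∑' k : ℕ, q k * ((k : ℝ) * (((k - 1 : ℕ) : ℝ) * x ^ (k - 1 - 1)))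
    with hD2
  have hmem : ∀ w : ℝ, w ∈ Set.Ioo (-(1/4) : ℝ) (1/4) →
      (1 - w)/2 ∈ Set.Ioo (-(3/4) : ℝ) (3/4) := by
    intro w hw
    obtain ⟨h1, h2⟩ := hw
    constructor <;> linarith
  have h0t : (0 : ℝ) ∈ Set.Ioo (-(1/4) : ℝ) (1/4) := by constructor <;> norm_num
  have e0 : (1 - (0:ℝ))/2 = 1/2 := by norm_num
  have hγe : ∀ w, γ w = Real.exp (l * (G ((1 - w)/2) - G (1/2))) := by
    intro w
    rw [hγ, hM, hM, ← Real.exp_sub]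
    congr 1
    ring
  have hγ0 : γ 0 = 1 := by rw [hγe, e0]; simp
  have hφ : ∀ w : ℝ, HasDerivAt (fun w : ℝ => (1 - w)/2) (-(1/2)) w := by
    intro w
    have h : HasDerivAt (fun w : ℝ => (1 - w)/2) (-1/2) w :=
      ((hasDerivAt_id w).const_sub 1).div_const 2
    convert h using 1
    norm_num
  have key : ∀ w ∈ Set.Ioo (-(1/4) : ℝ) (1/4),
      HasDerivAt γ (γ w * (l * (D1 ((1 - w)/2) * (-(1/2))))) w := by
    intro w hw
    have hg1 := (aux_deriv1 q hq hq1 hsq (hmem w hw)).comp w (hφ w)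
    have hG2 : HasDerivAt (fun w : ℝ => G ((1 - w)/2)) (D1 ((1 - w)/2) * (-(1/2))) w := by
      have heq : (fun w : ℝ => G ((1 - w)/2))
          = (fun x : ℝ => ∑' k : ℕ, q k * x ^ k) ∘ (fun w : ℝ => (1 - w)/2) := by
        funext v; simp [hG, Function.comp]
      rw [heq]
      exact hg1
    have h3 := ((hG2.sub_const (G (1/2))).const_mul l).exp
    have hfun : γ = fun w => Real.exp (l * (G ((1 - w)/2) - G (1/2))) := funext hγe
    rw [hfun]
    convert h3 using 1
  have hder1 : deriv γ 0 = -(l/2) * D1 (1/2) := by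
    have h := (key 0 h0t).deriv
    rw [hγ0, e0] at h
    rw [h]; ring
  -- second derivative
  have hψ : HasDerivAt (fun w : ℝ => l * (D1 ((1 - w)/2) * (-(1/2))))
      (l * ((D2 (1/2) * (-(1/2))) * (-(1/2)))) 0 := by
    have h2 := (aux_deriv2 q hq hq1 (hmem 0 h0t)).comp 0 (hφ 0)
    rw [e0] at h2
    have heq : (fun w : ℝ => D1 ((1 - w)/2))
        = (fun x : ℝ => ∑' k : ℕ, q k * ((k : ℝ) * x ^ (k - 1))) ∘ (fun w : ℝ => (1 - w)/2) := by
      funext v; simp [hD1, Function.comp]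
    have h2' : HasDerivAt (fun w : ℝ => D1 ((1 - w)/2)) (D2 (1/2) * (-(1/2))) 0 := by
      rw [heq]; exact h2
    exact (h2'.mul_const (-(1/2))).const_mul l
  have hΓ : HasDerivAt (fun w => γ w * (l * (D1 ((1 - w)/2) * (-(1/2)))))
      ((γ 0 * (l * (D1 ((1 - 0)/2) * (-(1/2))))) * (l * (D1 ((1 - (0:ℝ))/2) * (-(1/2))))
        + γ 0 * (l * ((D2 (1/2) * (-(1/2))) * (-(1/2))))) 0 :=
    (key 0 h0t).mul hψ
  have hev : deriv γ =ᶠ[nhds 0] fun w => γ w * (l * (D1 ((1 - w)/2) * (-(1/2)))) :=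
    Filter.eventuallyEq_of_mem (isOpen_Ioo.mem_nhds h0t) (fun w hw => (key w hw).deriv)
  have hit2 : iteratedDeriv 2 γ 0 = deriv (deriv γ) 0 := by
    rw [iteratedDeriv_succ, iteratedDeriv_one]
  have hd2 : iteratedDeriv 2 γ 0
      = (l/2 * D1 (1/2)) ^ 2 + l/4 * D2 (1/2) := by
    rw [hit2, hev.deriv_eq, hΓ.deriv, hγ0, e0]
    ring
  have hkey : iteratedDeriv 2 γ 0 - (deriv γ 0) ^ 2 - deriv γ 0
      = l/4 * D2 (1/2) + l/2 * D1 (1/2) := by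
    rw [hd2, hder1]; ring
  constructor
  · rw [hkey, hD1, hD2]
    exact aux_tsum_alg q hq hq1 l
  · rw [hkey, hD1, hD2, aux_tsum_alg q hq hq1 l]
    exact mul_nonneg hl.le (tsum_nonneg fun k => mul_nonneg (by positivity) (hq k))
end

section
/- Let 0 < p < 1 and let 𝓜(w) = 1 − p + p w^4, so that 𝓜(1/2) = 1 − 15p/16, and define γ(w) = 𝓜((1−w)/2) / 𝓜(1/2). Then γ'''(0) − 3 γ''(0) γ'(0) + 2 (γ'(0))^3 − 2 γ'(0) = p(1−p)(23p − 16) / (16 (𝓜(1/2))^3). In particular, this quantity is strictly negative whenever 0 < p < 16/23. -/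
lemma deriv_quartic (a b c d e : ℝ) :
    deriv (fun w : ℝ => a + b * w + c * w ^ 2 + d * w ^ 3 + e * w ^ 4)
      = fun w => b + 2 * c * w + 3 * d * w ^ 2 + 4 * e * w ^ 3 := by
  funext w
  have h : HasDerivAt (fun w : ℝ => a + b * w + c * w ^ 2 + d * w ^ 3 + e * w ^ 4)
      (b + 2 * c * w + 3 * d * w ^ 2 + 4 * e * w ^ 3) w := by
    have h0 : HasDerivAt (fun _ : ℝ => a) 0 w := hasDerivAt_const w a
    have h1 : HasDerivAt (fun w : ℝ => b * w) b w := by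
      simpa using (hasDerivAt_id w).const_mul b
    have h2 : HasDerivAt (fun w : ℝ => c * w ^ 2) (c * (2 * w)) w := by
      simpa using (hasDerivAt_pow 2 w).const_mul c
    have h3 : HasDerivAt (fun w : ℝ => d * w ^ 3) (d * (3 * w ^ 2)) w := by
      simpa using (hasDerivAt_pow 3 w).const_mul d
    have h4 : HasDerivAt (fun w : ℝ => e * w ^ 4) (e * (4 * w ^ 3)) w := by
      simpa using (hasDerivAt_pow 4 w).const_mul e
    have := (((h0.add h1).add h2).add h3).add h4
    exact this.congr_deriv (by ring)
  exact h.deriv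

/-- For `0 < p < 1`, `M w = 1 - p + p w⁴` (so `M (1/2) = 1 - 15p/16`) and
`γ w = M ((1-w)/2) / M (1/2)`, one has
`γ'''(0) - 3γ''(0)γ'(0) + 2γ'(0)³ - 2γ'(0) = p(1-p)(23p-16) / (16 (M (1/2))³)`,
which is strictly negative whenever `0 < p < 16/23`. -/
theorem imas_fails_for_jump_four
    (p : ℝ) (hp0 : 0 < p) (hp1 : p < 1)
    (M : ℝ → ℝ) (hM : ∀ w, M w = 1 - p + p * w ^ 4)
    (γ : ℝ → ℝ) (hγ : ∀ w, γ w = M ((1 - w) / 2) / M (1 / 2)) :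
    M (1 / 2) = 1 - 15 * p / 16 ∧
    iteratedDeriv 3 γ 0 - 3 * iteratedDeriv 2 γ 0 * deriv γ 0
        + 2 * (deriv γ 0) ^ 3 - 2 * deriv γ 0
      = p * (1 - p) * (23 * p - 16) / (16 * (M (1 / 2)) ^ 3) ∧
    (p < 16 / 23 →
      iteratedDeriv 3 γ 0 - 3 * iteratedDeriv 2 γ 0 * deriv γ 0
          + 2 * (deriv γ 0) ^ 3 - 2 * deriv γ 0 < 0) := by
  have hm : M (1 / 2) = 1 - 15 * p / 16 := by rw [hM]; ring
  set m : ℝ := M (1 / 2) with hmdef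
  have hmpos : 0 < m := by rw [hm]; linarith
  have hmne : m ≠ 0 := ne_of_gt hmpos
  -- explicit polynomial form of γ
  have hγeq : γ = fun w : ℝ =>
      ((1 - p) / m + p / (16 * m)) + (-(p / (4 * m))) * w + (3 * p / (8 * m)) * w ^ 2
        + (-(p / (4 * m))) * w ^ 3 + (p / (16 * m)) * w ^ 4 := by
    funext w
    rw [hγ, hM]
    field_simp
    ring
  have hd1 : deriv γ = fun w : ℝ =>
      (-(p / (4 * m))) + 2 * (3 * p / (8 * m)) * w + 3 * (-(p / (4 * m))) * w ^ 2
        + 4 * (p / (16 * m)) * w ^ 3 := by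
    rw [hγeq, deriv_quartic]
  have hd1' : deriv γ = fun w : ℝ =>
      (-(p / (4 * m))) + (3 * p / (4 * m)) * w + (-(3 * p / (4 * m))) * w ^ 2
        + (p / (4 * m)) * w ^ 3 + (0 : ℝ) * w ^ 4 := by
    rw [hd1]; funext w; ring
  have hd2 : deriv (deriv γ) = fun w : ℝ =>
      (3 * p / (4 * m)) + 2 * (-(3 * p / (4 * m))) * w + 3 * (p / (4 * m)) * w ^ 2
        + 4 * (0 : ℝ) * w ^ 3 := by
    rw [hd1', deriv_quartic]
  have hd2' : deriv (deriv γ) = fun w : ℝ =>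
      (3 * p / (4 * m)) + (-(3 * p / (2 * m))) * w + (3 * p / (4 * m)) * w ^ 2
        + (0 : ℝ) * w ^ 3 + (0 : ℝ) * w ^ 4 := by
    rw [hd2]; funext w; ring
  have hd3 : deriv (deriv (deriv γ)) = fun w : ℝ =>
      (-(3 * p / (2 * m))) + 2 * (3 * p / (4 * m)) * w + 3 * (0 : ℝ) * w ^ 2
        + 4 * (0 : ℝ) * w ^ 3 := by
    rw [hd2', deriv_quartic]
  have e1 : deriv γ 0 = -(p / (4 * m)) := by rw [hd1]; norm_num
  have e2 : iteratedDeriv 2 γ 0 = 3 * p / (4 * m) := by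
    have : iteratedDeriv 2 γ = deriv (deriv γ) := by
      simp [iteratedDeriv_succ, iteratedDeriv_one]
    rw [this, hd2]; norm_num
  have e3 : iteratedDeriv 3 γ 0 = -(3 * p / (2 * m)) := by
    have : iteratedDeriv 3 γ = deriv (deriv (deriv γ)) := by
      simp [iteratedDeriv_succ, iteratedDeriv_one]
    rw [this, hd3]; norm_num
  have key : iteratedDeriv 3 γ 0 - 3 * iteratedDeriv 2 γ 0 * deriv γ 0
        + 2 * (deriv γ 0) ^ 3 - 2 * deriv γ 0
      = p * (1 - p) * (23 * p - 16) / (16 * m ^ 3) := by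
    rw [e1, e2, e3, hm]
    have h16 : (16 : ℝ) - 15 * p ≠ 0 := by intro h; nlinarith
    field_simp
    ring
  refine ⟨hm, key, fun hp23 => ?_⟩
  rw [key]
  apply div_neg_of_neg_of_pos
  · exact mul_neg_of_pos_of_neg (mul_pos hp0 (by linarith)) (by linarith)
  · positivity
end

section
/- Let β > 0 and let γ(w) = exp(−β w / 2), D = 2/β, E = F = 1/2. Then for every θ ∈ [−π, −π/3) ∪ (π/3, π], both E·log|2 − e^{iθ}| + D·log|γ(1 − e^{iθ})| < 0 and F·log|2 − e^{iθ}| − D·log|γ(e^{iθ} − 1)| < 0; explicitly, both quantities equal (1/4)·log(5 − 4 cos θ) − (1 − cos θ), which is strictly negative for such θ. -/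
open Real Complex

lemma abs_two_sub_exp (θ : ℝ) :
    Norm.norm (2 - Complex.exp (θ * Complex.I)) = Real.sqrt (5 - 4 * Real.cos θ) := by
  rw [Complex.norm_def, Complex.normSq_apply]
  congr 1
  simp [Complex.exp_mul_I, Complex.sub_re, Complex.sub_im, Complex.cos_ofReal_re,
    Complex.sin_ofReal_re]
  have := Real.sin_sq_add_cos_sq θ
  nlinarith [this]

lemma log_abs_two_sub_exp (θ : ℝ) :
    Real.log (Norm.norm (2 - Complex.exp (θ * Complex.I)))
      = (1 / 2) * Real.log (5 - 4 * Real.cos θ) := by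
  rw [abs_two_sub_exp, Real.log_sqrt (by have := Real.cos_le_one θ; linarith)]
  ring

lemma cos_lt_half (θ : ℝ)
    (hθ : θ ∈ Set.Ico (-Real.pi) (-(Real.pi / 3)) ∪ Set.Ioc (Real.pi / 3) Real.pi) :
    Real.cos θ < 1 / 2 := by
  have hpi := Real.pi_pos
  have key : ∀ x : ℝ, Real.pi / 3 < x → x ≤ Real.pi → Real.cos x < 1 / 2 := by
    intro x h1 h2
    have := Real.cos_lt_cos_of_nonneg_of_le_pi (by positivity) h2 h1
    rw [Real.cos_pi_div_three] at this
    linarith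
  rcases hθ with ⟨h1, h2⟩ | ⟨h1, h2⟩
  · rw [← Real.cos_neg]
    exact key (-θ) (by linarith) (by linarith)
  · exact key θ h1 h2

/-- For `β > 0`, `γ z = exp (-β z / 2)`, `D = 2/β`, `E = F = 1/2`, and any
`θ ∈ [-π, -π/3) ∪ (π/3, π]`, both
`E·log|2 - e^{iθ}| + D·log|γ(1 - e^{iθ})| < 0` and
`F·log|2 - e^{iθ}| - D·log|γ(e^{iθ} - 1)| < 0`; explicitly both quantities equal
`(1/4)·log(5 - 4cos θ) - (1 - cos θ)`, which is strictly negative for such `θ`. -/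
theorem limcon_holds_for_continuous_time_tasep
    (β : ℝ) (hβ : 0 < β)
    (γ : ℂ → ℂ) (hγ : ∀ z, γ z = Complex.exp (-(β : ℂ) * z / 2))
    (D E F : ℝ) (hD : D = 2 / β) (hE : E = 1 / 2) (hF : F = 1 / 2)
    (θ : ℝ)
    (hθ : θ ∈ Set.Ico (-Real.pi) (-(Real.pi / 3)) ∪ Set.Ioc (Real.pi / 3) Real.pi) :
    E * Real.log (Norm.norm (2 - Complex.exp (θ * Complex.I)))
        + D * Real.log (Norm.norm (γ (1 - Complex.exp (θ * Complex.I))))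
      = (1 / 4) * Real.log (5 - 4 * Real.cos θ) - (1 - Real.cos θ) ∧
    F * Real.log (Norm.norm (2 - Complex.exp (θ * Complex.I)))
        - D * Real.log (Norm.norm (γ (Complex.exp (θ * Complex.I) - 1)))
      = (1 / 4) * Real.log (5 - 4 * Real.cos θ) - (1 - Real.cos θ) ∧
    E * Real.log (Norm.norm (2 - Complex.exp (θ * Complex.I)))
        + D * Real.log (Norm.norm (γ (1 - Complex.exp (θ * Complex.I)))) < 0 ∧
    F * Real.log (Norm.norm (2 - Complex.exp (θ * Complex.I)))
        - D * Real.log (Norm.norm (γ (Complex.exp (θ * Complex.I) - 1))) < 0 := by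
  have hc := cos_lt_half θ hθ
  have hlog := log_abs_two_sub_exp θ
  have habs1 : Norm.norm (γ (1 - Complex.exp (θ * Complex.I)))
      = Real.exp (-(β / 2) * (1 - Real.cos θ)) := by
    rw [hγ, Complex.norm_exp]
    congr 1
    simp [Complex.exp_mul_I, Complex.div_re, Complex.normSq_apply, Complex.sub_re,
      Complex.sub_im, Complex.mul_re, Complex.mul_im, Complex.cos_ofReal_re,
      Complex.sin_ofReal_re, Complex.cos_ofReal_im, Complex.sin_ofReal_im]
    ring
  have habs2 : Norm.norm (γ (Complex.exp (θ * Complex.I) - 1))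
      = Real.exp ((β / 2) * (1 - Real.cos θ)) := by
    rw [hγ, Complex.norm_exp]
    congr 1
    simp [Complex.exp_mul_I, Complex.div_re, Complex.normSq_apply, Complex.sub_re,
      Complex.sub_im, Complex.mul_re, Complex.mul_im, Complex.cos_ofReal_re,
      Complex.sin_ofReal_re, Complex.cos_ofReal_im, Complex.sin_ofReal_im]
    ring
  rw [habs1, habs2, Real.log_exp, Real.log_exp, hlog, hD, hE, hF]
  have hβ' : β ≠ 0 := ne_of_gt hβ
  have heq1 : 1 / 2 * (1 / 2 * Real.log (5 - 4 * Real.cos θ))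
      + 2 / β * (-(β / 2) * (1 - Real.cos θ))
      = 1 / 4 * Real.log (5 - 4 * Real.cos θ) - (1 - Real.cos θ) := by
    field_simp; ring
  have heq2 : 1 / 2 * (1 / 2 * Real.log (5 - 4 * Real.cos θ))
      - 2 / β * (β / 2 * (1 - Real.cos θ))
      = 1 / 4 * Real.log (5 - 4 * Real.cos θ) - (1 - Real.cos θ) := by
    field_simp; ring
  have hneg : 1 / 4 * Real.log (5 - 4 * Real.cos θ) - (1 - Real.cos θ) < 0 := by
    have h1 : (0:ℝ) < 5 - 4 * Real.cos θ := by linarith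
    have h2 : Real.log (5 - 4 * Real.cos θ) < (5 - 4 * Real.cos θ) - 1 :=
      Real.log_lt_sub_one_of_pos h1 (by intro h; nlinarith)
    linarith
  exact ⟨heq1, heq2, heq1 ▸ hneg, heq2 ▸ hneg⟩
end

section
/- Let γ : ℝ → ℝ be three times continuously differentiable on a neighborhood of 0 with γ(0) = 1 and γ > 0 near 0, and suppose d := γ'''(0) − 3 γ''(0) γ'(0) + 2 (γ'(0))^3 − 2 γ'(0) ≠ 0. Define D = 2/d, E = (γ''(0) − (γ'(0))^2 − γ'(0))/d, F = ((γ'(0))^2 − γ''(0) − γ'(0))/d, and f(x) = E log(1 + x) − F log(1 − x) + D log γ(x) for x in a neighborhood of 0. Then f(0) = 0, f'(0) = 0, f''(0) = 0, and f'''(0) = 2; that is, f has a double saddle point at x = 0 with third derivative exactly 2. -/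
/-- Saddle point computation.  If `γ` is C³ on a neighborhood of `0`,
`γ 0 = 1`, `γ > 0` near `0`, and `d := γ'''(0) - 3γ''(0)γ'(0) + 2γ'(0)³ - 2γ'(0) ≠ 0`,
then with `D = 2/d`, `E = (γ''(0) - γ'(0)² - γ'(0))/d`, `F = (γ'(0)² - γ''(0) - γ'(0))/d`
and `f x = E log(1+x) - F log(1-x) + D log (γ x)`, one has
`f 0 = 0`, `f' 0 = 0`, `f'' 0 = 0`, `f''' 0 = 2`. -/
theorem saddle_point_double_saddle
    (γ : ℝ → ℝ) (hγ : ContDiffAt ℝ 3 γ 0) (hγ0 : γ 0 = 1)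
    (hγpos : ∀ᶠ x in nhds (0 : ℝ), 0 < γ x)
    (d : ℝ)
    (hd : d = iteratedDeriv 3 γ 0 - 3 * iteratedDeriv 2 γ 0 * deriv γ 0
        + 2 * (deriv γ 0) ^ 3 - 2 * deriv γ 0)
    (hd0 : d ≠ 0)
    (D E F : ℝ)
    (hD : D = 2 / d)
    (hE : E = (iteratedDeriv 2 γ 0 - (deriv γ 0) ^ 2 - deriv γ 0) / d)
    (hF : F = ((deriv γ 0) ^ 2 - iteratedDeriv 2 γ 0 - deriv γ 0) / d)
    (f : ℝ → ℝ)
    (hf : ∀ x, f x = E * Real.log (1 + x) - F * Real.log (1 - x) + D * Real.log (γ x)) :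
    f 0 = 0 ∧ deriv f 0 = 0 ∧ iteratedDeriv 2 f 0 = 0 ∧ iteratedDeriv 3 f 0 = 2 := by
  -- iteratedDeriv bridges
  have hg2 : iteratedDeriv 2 γ = deriv (deriv γ) := by
    rw [show (2:ℕ) = 1+1 from rfl, iteratedDeriv_succ, iteratedDeriv_one]
  have hg3 : iteratedDeriv 3 γ = deriv (deriv (deriv γ)) := by
    rw [show (3:ℕ) = 2+1 from rfl, iteratedDeriv_succ, hg2]
  -- open set of smoothness
  obtain ⟨u0, hu0, hcd⟩ := hγ.contDiffOn le_rfl (by simp)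
  set s := interior u0 with hs
  have hso : IsOpen s := isOpen_interior
  have hs0 : (0:ℝ) ∈ s := mem_interior_iff_mem_nhds.2 hu0
  have hcds : ContDiffOn ℝ 3 γ s := hcd.mono interior_subset
  have hγ' : ContDiffOn ℝ 2 (deriv γ) s := hcds.deriv_of_isOpen hso (by norm_num)
  have hγ'' : ContDiffOn ℝ 1 (deriv (deriv γ)) s := hγ'.deriv_of_isOpen hso (by norm_num)
  have hev : ∀ᶠ x in nhds (0:ℝ), x ∈ s ∧ 0 < γ x ∧ 0 < 1 + x ∧ 0 < 1 - x := by
    filter_upwards [hso.mem_nhds hs0, hγpos, Metric.ball_mem_nhds (0:ℝ) one_pos] with x h1 h2 h3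
    have hx : |x| < 1 := by simpa [Real.dist_eq] using h3
    have := abs_lt.1 hx
    exact ⟨h1, h2, by linarith [this.1], by linarith [this.2]⟩
  set φ : ℝ → ℝ := fun x => E/(1+x) + F/(1-x) + D * (deriv γ x / γ x) with hφ
  set ψ : ℝ → ℝ := fun x => -E/(1+x)^2 + F/(1-x)^2
      + D * ((deriv (deriv γ) x * γ x - deriv γ x * deriv γ x)/(γ x)^2) with hψ
  have hder1 : ∀ᶠ x in nhds (0:ℝ), HasDerivAt f (φ x) x := by
    filter_upwards [hev] with x hx
    obtain ⟨hxs, hγx, h1x, h2x⟩ := hx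
    have hmem : s ∈ nhds x := hso.mem_nhds hxs
    have hγd : DifferentiableAt ℝ γ x :=
      ((hcds x hxs).contDiffAt hmem).differentiableAt (by norm_num)
    have d1 : HasDerivAt (fun y : ℝ => Real.log (1 + y)) (1/(1+x)) x :=
      ((show HasDerivAt (fun y : ℝ => y) 1 x from hasDerivAt_id x).const_add 1).log (by linarith)
    have d2 : HasDerivAt (fun y : ℝ => Real.log (1 - y)) ((-1)/(1-x)) x :=
      ((show HasDerivAt (fun y : ℝ => y) 1 x from hasDerivAt_id x).const_sub 1).log (by linarith)
    have d3 : HasDerivAt (fun y : ℝ => Real.log (γ y)) (deriv γ x / γ x) x :=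
      hγd.hasDerivAt.log (ne_of_gt hγx)
    have hcomb := ((d1.const_mul E).sub (d2.const_mul F)).add (d3.const_mul D)
    have heq : f = fun y => E * Real.log (1+y) - F * Real.log (1-y) + D * Real.log (γ y) :=
      funext hf
    rw [heq]
    refine hcomb.congr_deriv ?_
    simp only [hφ]
    ring
  have hder2 : ∀ᶠ x in nhds (0:ℝ), HasDerivAt φ (ψ x) x := by
    filter_upwards [hev] with x hx
    obtain ⟨hxs, hγx, h1x, h2x⟩ := hx
    have hmem : s ∈ nhds x := hso.mem_nhds hxs
    have hγd : DifferentiableAt ℝ γ x :=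
      ((hcds x hxs).contDiffAt hmem).differentiableAt (by norm_num)
    have hud : DifferentiableAt ℝ (deriv γ) x :=
      ((hγ' x hxs).contDiffAt hmem).differentiableAt (by norm_num)
    have e1 := (hasDerivAt_const x E).div ((show HasDerivAt (fun y : ℝ => y) 1 x from hasDerivAt_id x).const_add 1) (by linarith)
    have e2 := (hasDerivAt_const x F).div ((show HasDerivAt (fun y : ℝ => y) 1 x from hasDerivAt_id x).const_sub 1) (by linarith)
    have e3 := (hud.hasDerivAt.div hγd.hasDerivAt (ne_of_gt hγx)).const_mul D
    have hcomb := (e1.add e2).add e3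
    refine hcomb.congr_deriv ?_
    simp only [hψ]
    ring
  have hφd : deriv f =ᶠ[nhds (0:ℝ)] φ := hder1.mono fun x h => h.deriv
  have hψd : deriv φ =ᶠ[nhds (0:ℝ)] ψ := hder2.mono fun x h => h.deriv
  have h2eq : deriv (deriv f) =ᶠ[nhds (0:ℝ)] ψ := (hφd.deriv).trans hψd
  -- third derivative setup at 0
  have hmem0 : s ∈ nhds (0:ℝ) := hso.mem_nhds hs0
  have hγd0 : DifferentiableAt ℝ γ 0 :=
    ((hcds 0 hs0).contDiffAt hmem0).differentiableAt (by norm_num)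
  have hud0 : DifferentiableAt ℝ (deriv γ) 0 :=
    ((hγ' 0 hs0).contDiffAt hmem0).differentiableAt (by norm_num)
  have hvd0 : DifferentiableAt ℝ (deriv (deriv γ)) 0 :=
    ((hγ'' 0 hs0).contDiffAt hmem0).differentiableAt (by norm_num)
  have hn1 : (1:ℝ) + 0 ≠ 0 := by norm_num
  have hn2 : (1:ℝ) - 0 ≠ 0 := by norm_num
  have e1 := (hasDerivAt_const (0:ℝ) (-E)).div (((show HasDerivAt (fun y : ℝ => y) 1 (0:ℝ) from hasDerivAt_id 0).const_add 1).pow 2)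
      (by norm_num)
  have e2 := (hasDerivAt_const (0:ℝ) F).div (((show HasDerivAt (fun y : ℝ => y) 1 (0:ℝ) from hasDerivAt_id 0).const_sub 1).pow 2)
      (by norm_num)
  have hN := (hvd0.hasDerivAt.mul hγd0.hasDerivAt).sub (hud0.hasDerivAt.mul hud0.hasDerivAt)
  have hDen := hγd0.hasDerivAt.pow 2
  have hγ0ne : (γ 0)^2 ≠ 0 := by rw [hγ0]; norm_num
  have e3 := (hN.div hDen hγ0ne).const_mul D
  have hψder := (e1.add e2).add e3
  have hψ3 : HasDerivAt ψ
      ((0 * (1+(0:ℝ))^2 - (-E) * (↑2 * (1+(0:ℝ))^(2-1) * 1)) / ((1+(0:ℝ))^2)^2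
       + (0 * (1-(0:ℝ))^2 - F * (↑2 * (1-(0:ℝ))^(2-1) * (-1))) / ((1-(0:ℝ))^2)^2
       + D * (((deriv (deriv (deriv γ)) 0 * γ 0 + deriv (deriv γ) 0 * deriv γ 0
              - (deriv (deriv γ) 0 * deriv γ 0 + deriv γ 0 * deriv (deriv γ) 0)) * γ 0 ^ 2
            - (deriv (deriv γ) 0 * γ 0 - deriv γ 0 * deriv γ 0) * (↑2 * γ 0 ^ (2-1) * deriv γ 0))
            / (γ 0 ^ 2)^2)) 0 := hψder
  constructor
  · rw [hf]; simp [hγ0]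
  refine ⟨?_, ?_, ?_⟩
  · have h1 : deriv f 0 = φ 0 := hder1.self_of_nhds.deriv
    rw [h1, hφ]
    simp only [hγ0]
    rw [hE, hF, hD, hg2]
    field_simp
    ring
  · have h1 : deriv (deriv f) 0 = ψ 0 := h2eq.self_of_nhds
    rw [show (2:ℕ) = 1+1 from rfl, iteratedDeriv_succ, iteratedDeriv_one, h1, hψ]
    simp only [hγ0]
    rw [hE, hF, hD, hg2]
    field_simp
    ring
  · have h1 : deriv (deriv (deriv f)) 0 = deriv ψ 0 := h2eq.deriv_eq
    rw [show (3:ℕ) = 1+1+1 from rfl, iteratedDeriv_succ, iteratedDeriv_succ, iteratedDeriv_one,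
      h1, hψ3.deriv]
    simp only [hγ0]
    rw [hE, hF, hD, hd, hg2, hg3]
    rw [hd, hg2, hg3] at hd0
    set q := deriv (deriv (deriv γ)) 0 - 3 * deriv (deriv γ) 0 * deriv γ 0 + 2 * deriv γ 0 ^ 3 - 2 * deriv γ 0 with hq
    field_simp
    ring
end
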